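/- Fix integers n, j, m ≥ 1 with j ≤ n, a composition (n_1,…,n_j) of n into j positive parts, a real α < 1, and real weights V(n,k) with V(n,j) ≠ 0. Let 1 ≤ r ≤ j and let m_1,…,m_r be nonnegative integers with M = ∑_{i=1}^{r} m_i ≤ m. Then the r-dimensional marginal of the joint conditional distribution of old-block allocations satisfies: ∑ J(m_1,…,m_j; s) = [m!·∏_{i=1}^{r} (n_i−α)_{m_i}/(m_1!⋯m_r!·(m−M)!)]·∑_{k=0}^{m−M} (V(n+m,j+k)/V(n,j))·S(m−M, k; α, −(n−(j−r)α−∑_{i=1}^{r} n_i)), where the sum ranges over all tuples (m_{r+1},…,m_j) of nonnegative integers and s ≥ 0 with ∑_{i=r+1}^{j} m_i + s = m − M. -/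

import Mathlib

/-- Rising factorial `(x)_n = x(x+1)⋯(x+n−1)`. -/
noncomputable def risingFac (x : ℝ) (n : ℕ) : ℝ := ∏ i ∈ Finset.range n, (x + i)

/-- Rising factorial with increment `α`: `(x)_{n↑α} = ∏_{i<n} (x + iα)`. -/
noncomputable def risingFacInc (x α : ℝ) (n : ℕ) : ℝ := ∏ i ∈ Finset.range n, (x + i * α)

/-- Falling factorial `(x)_{[n]} = x(x−1)⋯(x−n+1)`. -/
noncomputable def fallingFac (x : ℝ) (n : ℕ) : ℝ := ∏ i ∈ Finset.range n, (x - i)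

/-- Compositions of `n` into `k` positive parts, as functions `Fin k → ℕ`. -/
def compositions (n k : ℕ) : Finset (Fin k → ℕ) :=
  (Fintype.piFinset fun _ => Finset.range (n + 1)).filter
    (fun f => (∀ i, 0 < f i) ∧ ∑ i, f i = n)

/-- Tuples of `k` nonnegative integers summing to `n`. -/
def weakCompositions (n k : ℕ) : Finset (Fin k → ℕ) :=
  (Fintype.piFinset fun _ => Finset.range (n + 1)).filter (fun f => ∑ i, f i = n)

/-- Generalized (central) Stirling number
`S(n,k;α) = (n!/k!) ∑_{(n_1,…,n_k)} ∏_j (1−α)_{n_j−1}/n_j!`,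
the sum over compositions of `n` into `k` positive parts. -/
noncomputable def genStirling (α : ℝ) (n k : ℕ) : ℝ :=
  (Nat.factorial n : ℝ) / (Nat.factorial k : ℝ) *
    ∑ f ∈ compositions n k, ∏ j, risingFac (1 - α) (f j - 1) / (Nat.factorial (f j) : ℝ)

/-- Non-central generalized Stirling number
`S(n,k;α,γ) = ∑_{s=k}^n C(n,s) S(s,k;α) (−γ)_{n−s}`. -/
noncomputable def genStirlingNC (α γ : ℝ) (n k : ℕ) : ℝ :=
  ∑ s ∈ Finset.Icc k n, (n.choose s : ℝ) * genStirling α s k * risingFac (-γ) (n - s)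

/-- The joint conditional distribution of old-block allocations
`J(m_1,…,m_j;s) = m!/(m_1!⋯m_j!·s!)·∏_i (n_i−α)_{m_i}·
∑_{k=0}^{s} (V(n+m,j+k)/V(n,j))·S(s,k;α)`. -/
noncomputable def oldJoint (α : ℝ) (V : ℕ → ℕ → ℝ) (n j m : ℕ) (nv : Fin j → ℕ)
    (mv : Fin j → ℕ) (s : ℕ) : ℝ :=
  (Nat.factorial m : ℝ) /
      ((∏ i, (Nat.factorial (mv i) : ℝ)) * (Nat.factorial s : ℝ)) *
    (∏ i, risingFac ((nv i : ℝ) - α) (mv i)) *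
    ∑ k ∈ Finset.range (s + 1), (V (n + m) (j + k) / V n j) * genStirling α s k

section Aux
open Finset

lemma risingFac_zero (x : ℝ) : risingFac x 0 = 1 := by simp [risingFac]

lemma risingFac_succ (x : ℝ) (n : ℕ) : risingFac x (n+1) = risingFac x n * (x + n) := by
  simp [risingFac, Finset.prod_range_succ]

lemma risingFac_vandermonde (x y : ℝ) (N : ℕ) :
    risingFac (x + y) N =
      ∑ ij ∈ Finset.HasAntidiagonal.antidiagonal N,
        (N.choose ij.1 : ℝ) * (risingFac x ij.1 * risingFac y ij.2) := by
  induction N with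
  | zero => simp [risingFac_zero]
  | succ n ih =>
    rw [risingFac_succ, ih, Finset.sum_mul,
      Finset.sum_antidiagonal_choose_succ_mul
        (fun i j => risingFac x i * risingFac y j) n,
      ← Finset.sum_add_distrib]
    refine Finset.sum_congr rfl fun ij hij => ?_
    have hsum : ij.1 + ij.2 = n := Finset.HasAntidiagonal.mem_antidiagonal.mp hij
    have h2 : (n.choose ij.2 : ℝ) = (n.choose ij.1 : ℝ) := by
      exact_mod_cast (Nat.choose_symm_of_eq_add hsum.symm).symm
    rw [risingFac_succ, risingFac_succ, h2]
    have : x + y + (n : ℝ) = (x + ij.1) + (y + ij.2) := by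
      rw [← hsum]; push_cast; ring
    rw [this]; ring

lemma sum_antidiagonalTuple_succ {M : Type*} [AddCommMonoid M] (q N : ℕ)
    (F : (Fin (q+1) → ℕ) → M) :
    ∑ w ∈ Finset.Nat.antidiagonalTuple (q+1) N, F w =
      ∑ ij ∈ Finset.HasAntidiagonal.antidiagonal N, ∑ w ∈ Finset.Nat.antidiagonalTuple q ij.2,
        F (Fin.cons ij.1 w) := by
  rw [Finset.sum_sigma']
  refine Finset.sum_bij' (fun (w : Fin (q+1) → ℕ) _ => (⟨(w 0, ∑ i : Fin q, w i.succ), Fin.tail w⟩ : (_ : ℕ × ℕ) × (Fin q → ℕ)))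
    (fun x _ => Fin.cons x.1.1 x.2) ?_ ?_ ?_ ?_ ?_
  · intro w hw
    have h := Finset.Nat.mem_antidiagonalTuple.mp hw
    rw [Fin.sum_univ_succ] at h
    simp only [Finset.mem_sigma, Finset.HasAntidiagonal.mem_antidiagonal, Finset.Nat.mem_antidiagonalTuple]
    exact ⟨h, rfl⟩
  · intro x hx
    simp only [Finset.mem_sigma, Finset.HasAntidiagonal.mem_antidiagonal,
      Finset.Nat.mem_antidiagonalTuple] at hx ⊢
    rw [Fin.sum_univ_succ]
    simpa [hx.2] using hx.1
  · intro w _; exact Fin.cons_self_tail w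
  · intro x hx
    simp only [Finset.mem_sigma, Finset.HasAntidiagonal.mem_antidiagonal,
      Finset.Nat.mem_antidiagonalTuple] at hx
    simp [Fin.tail_cons, Fin.cons_succ, hx.2]
  · intro w _; rw [Fin.cons_self_tail]

lemma risingFac_zero_left (n : ℕ) : risingFac 0 (n+1) = 0 := by
  apply Finset.prod_eq_zero (Finset.mem_range.mpr (Nat.succ_pos n))
  simp

lemma risingFac_multi_vandermonde (q : ℕ) (x : Fin q → ℝ) : ∀ N : ℕ,
    ∑ w ∈ Finset.Nat.antidiagonalTuple q N,
      ((N.factorial : ℝ) / ∏ i, ((w i).factorial : ℝ)) * ∏ i, risingFac (x i) (w i)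
      = risingFac (∑ i, x i) N := by
  induction q with
  | zero =>
    intro N
    cases N with
    | zero => simp [risingFac_zero]
    | succ n =>
      rw [Finset.Nat.antidiagonalTuple_zero_succ]
      simp [risingFac_zero_left]
  | succ q ih =>
    intro N
    rw [sum_antidiagonalTuple_succ (M := ℝ) q N
      (fun w => ((N.factorial : ℝ) / ∏ i, ((w i).factorial : ℝ)) * ∏ i, risingFac (x i) (w i))]
    rw [Fin.sum_univ_succ, risingFac_vandermonde]
    refine Finset.sum_congr rfl fun ij hij => ?_
    have hsum : ij.1 + ij.2 = N := Finset.HasAntidiagonal.mem_antidiagonal.mp hij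
    rw [← ih (fun i => x i.succ) ij.2, Finset.mul_sum, Finset.mul_sum]
    refine Finset.sum_congr rfl fun w hw => ?_
    simp only [Fin.prod_univ_succ, Fin.cons_zero, Fin.cons_succ]
    have hle : ij.1 ≤ N := by omega
    have hN : ((N.factorial : ℝ)) =
        (N.choose ij.1 : ℝ) * (ij.1.factorial : ℝ) * (ij.2.factorial : ℝ) := by
      have := Nat.choose_mul_factorial_mul_factorial hle
      rw [show N - ij.1 = ij.2 by omega] at this
      exact_mod_cast this.symm
    have h1 : ((ij.1.factorial : ℝ)) ≠ 0 := Nat.cast_ne_zero.mpr (Nat.factorial_ne_zero _)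
    have h2 : ((ij.2.factorial : ℝ)) ≠ 0 := Nat.cast_ne_zero.mpr (Nat.factorial_ne_zero _)
    have h3 : (∏ i, ((w i).factorial : ℝ)) ≠ 0 :=
      Finset.prod_ne_zero_iff.mpr fun i _ => Nat.cast_ne_zero.mpr (Nat.factorial_ne_zero _)
    rw [hN]
    field_simp

lemma compositions_eq_empty {n k : ℕ} (h : n < k) : compositions n k = ∅ := by
  ext f
  simp only [compositions, Finset.mem_filter, Finset.notMem_empty, iff_false, not_and]
  rintro _ hpos hsum
  have : k ≤ ∑ i, f i := by
    calc k = ∑ _i : Fin k, 1 := by simp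
    _ ≤ ∑ i, f i := Finset.sum_le_sum fun i _ => hpos i
  omega

lemma genStirling_eq_zero {n k : ℕ} (α : ℝ) (h : n < k) : genStirling α n k = 0 := by
  rw [genStirling, compositions_eq_empty h]
  simp

lemma sum_filter_prod_eq (q m t : ℕ) (ht : t ≤ m) (F : (Fin q → ℕ) → ℕ → ℝ) :
    ∑ p ∈ ((Fintype.piFinset fun _ : Fin q => Finset.range (m + 1)) ×ˢ
          Finset.range (m + 1)).filter (fun p => ∑ i, p.1 i + p.2 = t), F p.1 p.2
      = ∑ s ∈ Finset.range (t + 1), ∑ w ∈ Finset.Nat.antidiagonalTuple q (t - s), F w s := by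
  rw [Finset.sum_sigma']
  refine Finset.sum_bij' (fun (p : (Fin q → ℕ) × ℕ) _ => (⟨p.2, p.1⟩ : (s : ℕ) × (Fin q → ℕ)))
    (fun x _ => (x.2, x.1)) ?_ ?_ ?_ ?_ ?_
  · intro p hp
    simp only [Finset.mem_filter, Finset.mem_product, Fintype.mem_piFinset,
      Finset.mem_range] at hp
    simp only [Finset.mem_sigma, Finset.mem_range, Finset.Nat.mem_antidiagonalTuple]
    omega
  · intro x hx
    simp only [Finset.mem_sigma, Finset.mem_range, Finset.Nat.mem_antidiagonalTuple] at hx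
    simp only [Finset.mem_filter, Finset.mem_product, Fintype.mem_piFinset, Finset.mem_range]
    have hb : ∀ i, x.2 i ≤ t - x.1 := fun i => hx.2 ▸
      Finset.single_le_sum (fun _ _ => Nat.zero_le _) (Finset.mem_univ i)
    refine ⟨⟨fun i => by have := hb i; omega, by omega⟩, by omega⟩
  · intro p _; rfl
  · intro x _; rfl
  · intro p _; rfl

lemma prod_append_split {j r q : ℕ} (h' : j = r + q) (G : Fin j → ℕ → ℝ)
    (mv : Fin r → ℕ) (w : Fin q → ℕ) :
    ∏ i : Fin j, G i (Fin.append mv w (Fin.cast h' i)) =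
      (∏ i : Fin r, G (Fin.cast h'.symm (Fin.castAdd q i)) (mv i)) *
        ∏ i : Fin q, G (Fin.cast h'.symm (Fin.natAdd r i)) (w i) := by
  subst h'
  simp only [Fin.cast_refl, id_eq]
  rw [Fin.prod_univ_add]
  simp [Fin.append_left, Fin.append_right]

lemma sum_append_split {j r q : ℕ} (h' : j = r + q) (G : Fin j → ℝ) :
    ∑ i : Fin j, G i =
      (∑ i : Fin r, G (Fin.cast h'.symm (Fin.castAdd q i))) +
        ∑ i : Fin q, G (Fin.cast h'.symm (Fin.natAdd r i)) := by
  subst h'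
  simp only [Fin.cast_refl, id_eq]
  rw [Fin.sum_univ_add]

end Aux
open Finset

/-- The `r`-dimensional marginal of the joint conditional distribution of
old-block allocations. -/
theorem oldJoint_marginal (n j m : ℕ) (hn : 1 ≤ n) (hj : 1 ≤ j) (hm : 1 ≤ m)
    (hjn : j ≤ n) (nv : Fin j → ℕ) (hnv : ∀ i, 0 < nv i) (hsum : ∑ i, nv i = n)
    (α : ℝ) (hα : α < 1) (V : ℕ → ℕ → ℝ) (hV : V n j ≠ 0)
    (r : ℕ) (hr : 1 ≤ r) (hrj : r ≤ j)
    (mv : Fin r → ℕ) (hM : ∑ i, mv i ≤ m) :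
    ∑ p ∈ ((Fintype.piFinset fun _ : Fin (j - r) => Finset.range (m + 1)) ×ˢ
          Finset.range (m + 1)).filter
        (fun p => ∑ i, p.1 i + p.2 = m - ∑ i, mv i),
        oldJoint α V n j m nv
          (fun i => Fin.append mv p.1 (Fin.cast (show j = r + (j - r) by omega) i))
          p.2 =
      (Nat.factorial m : ℝ) *
          (∏ i, risingFac ((nv (Fin.castLE hrj i) : ℝ) - α) (mv i)) /
          ((∏ i, (Nat.factorial (mv i) : ℝ)) * (Nat.factorial (m - ∑ i, mv i) : ℝ)) *
        ∑ k ∈ Finset.range (m - ∑ i, mv i + 1),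
          (V (n + m) (j + k) / V n j) *
            genStirlingNC α
              (-((n : ℝ) - ((j : ℝ) - r) * α - ∑ i, (nv (Fin.castLE hrj i) : ℝ)))
              (m - ∑ i, mv i) k := by
  have hq : j = r + (j - r) := by omega
  set t := m - ∑ i, mv i with htdef
  have ht : t ≤ m := by omega
  set x : Fin (j - r) → ℝ := fun i => (nv (Fin.cast hq.symm (Fin.natAdd r i)) : ℝ) - α
    with hxdef
  set A : ℝ := ∏ i, risingFac ((nv (Fin.castLE hrj i) : ℝ) - α) (mv i) with hAdef
  set K : ℕ → ℝ := fun s => ∑ k ∈ Finset.range (t + 1),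
    (V (n + m) (j + k) / V n j) * genStirling α s k with hKdef
  have hcast : ∀ i : Fin r, Fin.cast hq.symm (Fin.castAdd (j - r) i) = Fin.castLE hrj i :=
    fun i => rfl
  -- the sum of the x i
  have hX : ∑ i, x i =
      (n : ℝ) - ((j : ℝ) - r) * α - ∑ i, (nv (Fin.castLE hrj i) : ℝ) := by
    have hnsplit : (n : ℝ) = (∑ i : Fin r, (nv (Fin.castLE hrj i) : ℝ)) +
        ∑ i : Fin (j - r), (nv (Fin.cast hq.symm (Fin.natAdd r i)) : ℝ) := by
      have h := sum_append_split hq (fun i => (nv i : ℝ))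
      simp only [hcast] at h
      rw [← h, ← Nat.cast_sum, hsum]
    have hjr : ((j - r : ℕ) : ℝ) = (j : ℝ) - r := by
      push_cast [Nat.cast_sub hrj]; ring
    simp only [hxdef]
    rw [Finset.sum_sub_distrib, Finset.sum_const, Finset.card_univ, Fintype.card_fin,
      nsmul_eq_mul, hjr]
    rw [hnsplit]; ring
  -- rewrite non-central Stirling numbers
  have hNC : ∀ k, genStirlingNC α
      (-((n : ℝ) - ((j : ℝ) - r) * α - ∑ i, (nv (Fin.castLE hrj i) : ℝ))) t k =
      ∑ s ∈ Finset.range (t + 1),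
        (t.choose s : ℝ) * genStirling α s k * risingFac (∑ i, x i) (t - s) := by
    intro k
    rw [genStirlingNC, neg_neg, ← hX]
    apply Finset.sum_subset
    · intro s hs
      simp only [Finset.mem_Icc] at hs
      simp only [Finset.mem_range]; omega
    · intro s hs hns
      simp only [Finset.mem_range] at hs
      simp only [Finset.mem_Icc] at hns
      have : s < k := by omega
      rw [genStirling_eq_zero α this]; ring
  -- reshape the left-hand side
  rw [sum_filter_prod_eq (j - r) m t ht
    (fun w s => oldJoint α V n j m nv
      (fun i => Fin.append mv w (Fin.cast (show j = r + (j - r) by omega) i)) s)]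
  -- middle expression
  have hfacmv : (∏ i, ((mv i).factorial : ℝ)) ≠ 0 :=
    Finset.prod_ne_zero_iff.mpr fun i _ => Nat.cast_ne_zero.mpr (Nat.factorial_ne_zero _)
  have htfac : ((t.factorial : ℝ)) ≠ 0 := Nat.cast_ne_zero.mpr (Nat.factorial_ne_zero _)
  calc
    ∑ s ∈ Finset.range (t + 1), ∑ w ∈ Finset.Nat.antidiagonalTuple (j - r) (t - s),
        oldJoint α V n j m nv
          (fun i => Fin.append mv w (Fin.cast (show j = r + (j - r) by omega) i)) s
      = ∑ s ∈ Finset.range (t + 1),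
          ((m.factorial : ℝ) * A / ((∏ i, ((mv i).factorial : ℝ)) * (t.factorial : ℝ))) *
            (t.choose s : ℝ) * risingFac (∑ i, x i) (t - s) * K s := by
        refine Finset.sum_congr rfl fun s hs => ?_
        have hst : s ≤ t := by simp only [Finset.mem_range] at hs; omega
        have hKs : ∑ k ∈ Finset.range (s + 1),
            (V (n + m) (j + k) / V n j) * genStirling α s k = K s := by
          simp only [hKdef]
          apply Finset.sum_subset
          · intro u hu; simp only [Finset.mem_range] at hu ⊢; omega
          · intro u hu hnu
            simp only [Finset.mem_range] at hu hnu
            rw [genStirling_eq_zero α (by omega)]; ring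
        trans (∑ w ∈ Finset.Nat.antidiagonalTuple (j - r) (t - s),
          ((m.factorial : ℝ) * A / ((∏ i, ((mv i).factorial : ℝ)) * (t.factorial : ℝ)) *
            (t.choose s : ℝ) *
            ((((t - s).factorial : ℝ) / ∏ i, ((w i).factorial : ℝ)) *
              ∏ i, risingFac (x i) (w i))) * K s)
        · refine Finset.sum_congr rfl fun w hw => ?_
          show oldJoint α V n j m nv
            (fun i => Fin.append mv w (Fin.cast (show j = r + (j - r) by omega) i)) s = _
          rw [oldJoint]
          rw [prod_append_split hq (fun _ v => (v.factorial : ℝ)) mv w,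
            prod_append_split hq (fun i v => risingFac ((nv i : ℝ) - α) v) mv w]
          simp only [hcast]
          rw [hKs, ← hAdef]
          have hw' : (∏ i, ((w i).factorial : ℝ)) ≠ 0 :=
            Finset.prod_ne_zero_iff.mpr fun i _ => Nat.cast_ne_zero.mpr (Nat.factorial_ne_zero _)
          have hsf : ((s.factorial : ℝ)) ≠ 0 := Nat.cast_ne_zero.mpr (Nat.factorial_ne_zero _)
          have hfact : ((t.factorial : ℝ)) =
              (t.choose s : ℝ) * (s.factorial : ℝ) * (((t - s).factorial : ℝ)) := by
            exact_mod_cast (Nat.choose_mul_factorial_mul_factorial hst).symm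
          rw [hfact]
          have hchoose : ((t.choose s : ℕ) : ℝ) ≠ 0 :=
            Nat.cast_ne_zero.mpr (Nat.ne_of_gt (Nat.choose_pos hst))
          have hts : (((t - s).factorial : ℝ)) ≠ 0 :=
            Nat.cast_ne_zero.mpr (Nat.factorial_ne_zero _)
          field_simp
          ring
        · rw [← Finset.sum_mul, ← Finset.mul_sum, risingFac_multi_vandermonde]
    _ = ∑ s ∈ Finset.range (t + 1), ∑ k ∈ Finset.range (t + 1),
          ((m.factorial : ℝ) * A / ((∏ i, ((mv i).factorial : ℝ)) * (t.factorial : ℝ))) *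
            (V (n + m) (j + k) / V n j) *
            ((t.choose s : ℝ) * genStirling α s k * risingFac (∑ i, x i) (t - s)) := by
        refine Finset.sum_congr rfl fun s _ => ?_
        simp only [hKdef]
        rw [Finset.mul_sum]
        refine Finset.sum_congr rfl fun k _ => ?_
        ring
    _ = ∑ k ∈ Finset.range (t + 1), ∑ s ∈ Finset.range (t + 1),
          ((m.factorial : ℝ) * A / ((∏ i, ((mv i).factorial : ℝ)) * (t.factorial : ℝ))) *
            (V (n + m) (j + k) / V n j) *
            ((t.choose s : ℝ) * genStirling α s k * risingFac (∑ i, x i) (t - s)) :=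
        Finset.sum_comm
    _ = _ := by
        rw [Finset.mul_sum]
        refine Finset.sum_congr rfl fun k _ => ?_
        rw [hNC k, Finset.mul_sum, Finset.mul_sum]
        refine Finset.sum_congr rfl fun s _ => ?_
        ring
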